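/- arXiv:1503.06757 — 2 statements merged into one kernel-verified Lean document; each statement's English description precedes it below -/
import Mathlib

section
/- Every typical path from x to A is an optimal path from x to A: if ω ∈ Ω_{x,A} satisfies Φ(ω_{i+1},A) ≤ Φ(ω_i,A) for all i, then max_i H(ω_i) = Φ(x,A). -/
/- Abstract energy landscape: finite state space `X`, energy `H`, connectivity `q`. -/

variable {X : Type*}

/-- A path from `x` to `y`: a nonempty finite sequence of states with consecutive
states connected by `q`. -/
def IsPath (q : X → X → Prop) (ω : List X) (x y : X) : Prop :=
  ω ≠ [] ∧ ω.Chain' q ∧ ω.head? = some x ∧ ω.getLast? = some y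

/-- The elevation (height) of a path: the maximal energy along it. -/
noncomputable def elev (H : X → ℝ) (ω : List X) : ℝ :=
  sSup (H '' {z | z ∈ ω})

/-- The communication energy between two states: the minimal elevation over paths. -/
noncomputable def commE (H : X → ℝ) (q : X → X → Prop) (x y : X) : ℝ :=
  sInf {e | ∃ ω, IsPath q ω x y ∧ elev H ω = e}

/-- The communication energy between two sets of states. -/
noncomputable def commSet (H : X → ℝ) (q : X → X → Prop) (A B : Set X) : ℝ :=
  sInf {e | ∃ x ∈ A, ∃ y ∈ B, commE H q x y = e}

/-- A set of states is connected if any two of its states are joined by a path inside it. -/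
def SetConn (q : X → X → Prop) (C : Set X) : Prop :=
  ∀ x ∈ C, ∀ y ∈ C, ∃ ω, IsPath q ω x y ∧ ∀ z ∈ ω, z ∈ C

/-- The external boundary of a set of states. -/
def extBdry (q : X → X → Prop) (C : Set X) : Set X :=
  {y | y ∉ C ∧ ∃ x ∈ C, q x y}

/-- A non-trivial cycle: a connected set whose maximal internal energy is strictly
below the minimal energy on its external boundary. -/
def IsNontrivialCycle (H : X → ℝ) (q : X → X → Prop) (C : Set X) : Prop :=
  C.Nonempty ∧ SetConn q C ∧ sSup (H '' C) < sInf (H '' extBdry q C)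

/-- A cycle: a singleton, or a non-trivial cycle. -/
def IsCycle (H : X → ℝ) (q : X → X → Prop) (C : Set X) : Prop :=
  (∃ x, C = {x}) ∨ IsNontrivialCycle H q C

/-- The communication energy between a state and a set of states. -/
noncomputable def commA (H : X → ℝ) (q : X → X → Prop) (x : X) (A : Set X) : ℝ :=
  sInf {e | ∃ y ∈ A, commE H q x y = e}

/-- The initial cycle `C_A(x) = {x} ∪ {z : Φ(x,z) < Φ(x,A)}`. -/
def initCycle (H : X → ℝ) (q : X → X → Prop) (A : Set X) (x : X) : Set X :=
  {x} ∪ {z | commE H q x z < commA H q x A}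

/-- `ω ∈ Ω_{x,A}`: a path from `x` ending in `A` which does not visit `A` before
its endpoint. -/
def InOmega (q : X → X → Prop) (A : Set X) (x : X) (ω : List X) : Prop :=
  ω ≠ [] ∧ ω.Chain' q ∧ ω.head? = some x ∧
    (∃ y ∈ A, ω.getLast? = some y) ∧ ∀ z ∈ ω.dropLast, z ∉ A

section Aux

variable [Fintype X] (H : X → ℝ) (q : X → X → Prop)

lemma mem_le_elev {ω : List X} {z : X} (hz : z ∈ ω) : H z ≤ elev H ω :=
  le_csSup (Set.toFinite _).bddAbove ⟨z, hz, rfl⟩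

lemma head_mem_of_isPath {ω : List X} {x y : X} (h : IsPath q ω x y) : x ∈ ω := by
  obtain ⟨hne, _, hh, _⟩ := h
  exact List.mem_of_mem_head? hh

lemma commE_lb (hirr : ∀ x y : X, ∃ ω, IsPath q ω x y) (x y : X) :
    H x ≤ commE H q x y := by
  apply le_csInf
  · obtain ⟨ω, hω⟩ := hirr x y
    exact ⟨elev H ω, ω, hω, rfl⟩
  · rintro b ⟨ω, hω, rfl⟩
    exact mem_le_elev H (head_mem_of_isPath q hω)

lemma commE_le_elev {ω : List X} {x y : X} (h : IsPath q ω x y) :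
    commE H q x y ≤ elev H ω := by
  apply csInf_le
  · refine ⟨H x, ?_⟩
    rintro b ⟨ω', hω', rfl⟩
    exact mem_le_elev H (head_mem_of_isPath q hω')
  · exact ⟨ω, h, rfl⟩

lemma commA_lb (hirr : ∀ x y : X, ∃ ω, IsPath q ω x y)
    {A : Set X} (hA : A.Nonempty) (x : X) : H x ≤ commA H q x A := by
  apply le_csInf
  · obtain ⟨y, hy⟩ := hA
    exact ⟨commE H q x y, y, hy, rfl⟩
  · rintro b ⟨y, hy, rfl⟩
    exact commE_lb H q hirr x y

lemma commA_le_commE (hirr : ∀ x y : X, ∃ ω, IsPath q ω x y)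
    {A : Set X} {y : X} (hy : y ∈ A) (x : X) :
    commA H q x A ≤ commE H q x y := by
  apply csInf_le
  · refine ⟨H x, ?_⟩
    rintro b ⟨y', _, rfl⟩
    exact commE_lb H q hirr x y'
  · exact ⟨y, hy, rfl⟩

omit [Fintype X] in
lemma chain'_head_ge {f : X → ℝ} :
    ∀ (ω : List X) (x : X), ω.head? = some x →
      ω.Chain' (fun a b => f b ≤ f a) → ∀ z ∈ ω, f z ≤ f x
  | [], x, h => by simp at h
  | a :: t, x, h => by
    simp only [List.head?_cons, Option.some.injEq] at h
    subst h
    intro hc z hz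
    rcases List.mem_cons.mp hz with rfl | hz
    · exact le_refl _
    · match t, hz with
      | b :: t', hz =>
        rw [List.Chain', List.isChain_cons_cons] at hc
        exact le_trans (chain'_head_ge (b :: t') b rfl hc.2 z hz) hc.1

end Aux

/-- every typical path is optimal: if `ω ∈ Ω_{x,A}` satisfies
`Φ(ω_{i+1},A) ≤ Φ(ω_i,A)` for all `i`, then its elevation equals `Φ(x,A)`. -/
theorem typical_implies_optimal [Fintype X] (H : X → ℝ) (q : X → X → Prop)
    (hsymm : ∀ x y, q x y → q y x)
    (hirr : ∀ x y : X, ∃ ω, IsPath q ω x y)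
    (A : Set X) (hA : A.Nonempty) (x : X) (hx : x ∉ A)
    (ω : List X) (hω : InOmega q A x ω)
    (hmono : ω.Chain' (fun a b => commA H q b A ≤ commA H q a A)) :
    elev H ω = commA H q x A := by
  obtain ⟨hne, hchain, hhead, ⟨y, hyA, hlast⟩, hnotA⟩ := hω
  have hpath : IsPath q ω x y := ⟨hne, hchain, hhead, hlast⟩
  apply le_antisymm
  · apply csSup_le
    · obtain ⟨z, hz⟩ := List.exists_mem_of_ne_nil ω hne
      exact ⟨H z, z, hz, rfl⟩
    · rintro b ⟨z, hz, rfl⟩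
      calc H z ≤ commA H q z A := commA_lb H q hirr hA z
        _ ≤ commA H q x A := chain'_head_ge ω x hhead hmono z hz
  · exact le_trans (commA_le_commE H q hirr hyA x) (commE_le_elev H q hpath)
end

section
/- For the hard-core model on a complete K-partite graph with components of sizes L_1,…,L_K, the configurations σ_1,…,σ_K (component k fully occupied, all else empty) are exactly the local minima of H, and for k1 ≠ k2: Γ(σ_{k1}, {σ_{k2}}) = L_{k1} and Γ̃(X ∖ {σ_{k2}}) = L_* where L_* = max_{k ≠ k2} L_k. -/
/- Generic energy landscape definitions. -/

variable {X : Type*}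

/-- `C` is a maximal cycle contained in `B`. -/
def MaxCycleIn (H : X → ℝ) (q : X → X → Prop) (B C : Set X) : Prop :=
  IsCycle H q C ∧ C ⊆ B ∧ ∀ C', IsCycle H q C' → C' ⊆ B → C ⊆ C' → C' = C

/-- The depth of a cycle, `Γ(C) = Φ(C, X∖C) − min_{x∈C} H(x)`. -/
noncomputable def depth (H : X → ℝ) (q : X → X → Prop) (C : Set X) : ℝ :=
  commSet H q C Cᶜ - sInf (H '' C)

/-- The maximum depth of a set: the maximum depth of a maximal cycle contained in it. -/
noncomputable def maxDepth (H : X → ℝ) (q : X → X → Prop) (B : Set X) : ℝ :=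
  sSup {d | ∃ C, MaxCycleIn H q B C ∧ depth H q C = d}


/-- `Γ(x,A)`: the depth of the initial cycle, `Φ(x,A) − min_{z∈C_A(x)} H(z)`. -/
noncomputable def gammaInit (H : X → ℝ) (q : X → X → Prop) (A : Set X) (x : X) : ℝ :=
  commA H q x A - sInf (H '' initCycle H q A x)

/- The hard-core model on a complete `K`-partite graph with parts `B_k` of size `L k`. -/

/-- Vertices: the disjoint union of the parts; two vertices are adjacent iff they
lie in different parts, so independence means all occupied sites share one part. -/
def IsIndepKP (K : ℕ) (L : Fin K → ℕ) (σ : Finset (Σ k : Fin K, Fin (L k))) : Prop :=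
  ∀ v ∈ σ, ∀ w ∈ σ, v.1 = w.1

/-- The state space: independent sets of the complete `K`-partite graph. -/
def ConfigKP (K : ℕ) (L : Fin K → ℕ) := {σ : Finset (Σ k : Fin K, Fin (L k)) // IsIndepKP K L σ}

/-- Single-site update connectivity on configurations. -/
def qKP (K : ℕ) (L : Fin K → ℕ) (σ τ : ConfigKP K L) : Prop :=
  ((σ.1 \ τ.1) ∪ (τ.1 \ σ.1)).card = 1

/-- The energy `H(σ) = −|σ|`. -/
noncomputable def HKP (K : ℕ) (L : Fin K → ℕ) (σ : ConfigKP K L) : ℝ := -(σ.1.card : ℝ)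

section paths
variable {q : X → X → Prop} {H : X → ℝ} {ω : List X} {x y z : X} {c : ℝ}

lemma isPath_singleton (q : X → X → Prop) (x : X) : IsPath q [x] x x :=
  ⟨by simp, List.isChain_singleton _, rfl, rfl⟩

lemma isPath_pair (h : q x y) : IsPath q [x, y] x y :=
  ⟨by simp, List.isChain_pair.mpr h, rfl, rfl⟩

lemma IsPath.mem_head (h : IsPath q ω x y) : x ∈ ω := by
  obtain ⟨_, _, hh, _⟩ := h
  exact List.mem_of_mem_head? hh

lemma IsPath.mem_last (h : IsPath q ω x y) : y ∈ ω := by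
  obtain ⟨_, _, _, hl⟩ := h
  exact List.mem_of_mem_getLast? hl

lemma IsPath.reverse (hq : ∀ a b, q a b → q b a) (h : IsPath q ω x y) :
    IsPath q ω.reverse y x := by
  obtain ⟨hne, hch, hh, hl⟩ := h
  refine ⟨by simpa using hne, ?_, ?_, ?_⟩
  · rw [List.Chain', List.isChain_reverse]
    exact List.IsChain.imp (fun a b hab => hq a b hab) hch
  · rwa [List.head?_reverse]
  · rwa [List.getLast?_reverse]

lemma IsPath.glue {ω₁ ω₂ : List X} (h1 : IsPath q ω₁ x y) (h2 : IsPath q ω₂ y z) :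
    ∃ ω, IsPath q ω x z ∧ ∀ w ∈ ω, w ∈ ω₁ ∨ w ∈ ω₂ := by
  obtain ⟨hne1, hch1, hh1, hl1⟩ := h1
  obtain ⟨hne2, hch2, hh2, hl2⟩ := h2
  obtain ⟨t, rfl⟩ : ∃ t, ω₂ = y :: t := by
    cases ω₂ with
    | nil => exact absurd rfl hne2
    | cons a t =>
      have : a = y := by simpa using hh2
      exact ⟨t, by rw [this]⟩
  refine ⟨ω₁ ++ t, ⟨by simp [hne1], ?_, ?_, ?_⟩, ?_⟩
  · rw [List.Chain', List.isChain_append]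
    refine ⟨hch1, hch2.tail, fun a ha b hb => ?_⟩
    have : a = y := by rw [hl1] at ha; exact (Option.some_inj.mp ha).symm ▸ rfl
    subst this
    cases t with
    | nil => simp at hb
    | cons b' t' =>
      simp at hb
      subst hb
      exact (List.isChain_cons_cons.mp hch2).1
  · cases ω₁ with
    | nil => exact absurd rfl hne1
    | cons a t' => simpa using hh1
  · cases t with
    | nil =>
      simp only [List.append_nil]
      rw [hl1]
      simp at hl2
      rw [hl2]
    | cons b' t' =>
      rw [List.getLast?_append_cons]
      rwa [List.getLast?_cons_cons] at hl2
  · intro w hw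
    rcases List.mem_append.mp hw with h | h
    · exact Or.inl h
    · exact Or.inr (List.mem_cons_of_mem _ h)

lemma crossing {S : Set X} :
    ∀ (ω : List X) (x y : X), IsPath q ω x y → x ∈ S → y ∉ S →
      ∃ a b, a ∈ ω ∧ b ∈ ω ∧ a ∈ S ∧ b ∉ S ∧ q a b := by
  intro ω
  induction ω with
  | nil => intro x y h; exact absurd rfl h.1
  | cons u t ih =>
    intro x y ⟨hne, hch, hh, hl⟩ hx hy
    have hux : u = x := by simpa using hh
    subst hux
    cases t with
    | nil =>
      have : u = y := by simpa using hl
      exact absurd (this ▸ hx) hy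
    | cons b t' =>
      by_cases hb : b ∈ S
      · obtain ⟨a', b', ha', hb', hs1, hs2, hq'⟩ :=
          ih b y ⟨by simp, hch.tail, rfl, by rwa [List.getLast?_cons_cons] at hl⟩ hb hy
        exact ⟨a', b', List.mem_cons_of_mem _ ha', List.mem_cons_of_mem _ hb', hs1, hs2, hq'⟩
      · exact ⟨u, b, by simp, by simp, hx, hb, (List.isChain_cons_cons.mp hch).1⟩

lemma le_elev (hz : z ∈ ω) : H z ≤ elev H ω := by
  apply le_csSup
  · exact (Set.Finite.image H ω.finite_toSet).bddAbove
  · exact ⟨z, hz, rfl⟩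

lemma elev_le (hne : ω ≠ []) (h : ∀ w ∈ ω, H w ≤ c) : elev H ω ≤ c := by
  apply csSup_le
  · obtain ⟨a, ha⟩ := List.exists_mem_of_ne_nil ω hne
    exact ⟨H a, a, ha, rfl⟩
  · rintro e ⟨w, hw, rfl⟩
    exact h w hw

end paths

section commE
variable {q : X → X → Prop} {H : X → ℝ} {ω : List X} {x y z : X} {c : ℝ}

lemma bddBelow_elevSet (hb : ∀ w, c ≤ H w) :
    BddBelow {e | ∃ ω, IsPath q ω x y ∧ elev H ω = e} := by
  refine ⟨c, ?_⟩
  rintro e ⟨ω, hp, rfl⟩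
  exact le_trans (hb x) (le_elev hp.mem_head)

lemma commE_le (hb : ∀ w, c ≤ H w) (hp : IsPath q ω x y) : commE H q x y ≤ elev H ω :=
  csInf_le (bddBelow_elevSet hb) ⟨ω, hp, rfl⟩

lemma le_commE (hEx : ∃ ω, IsPath q ω x y)
    (h : ∀ ω, IsPath q ω x y → c ≤ elev H ω) : c ≤ commE H q x y := by
  apply le_csInf
  · obtain ⟨ω, hp⟩ := hEx
    exact ⟨elev H ω, ω, hp, rfl⟩
  · rintro e ⟨ω, hp, rfl⟩
    exact h ω hp

end commE

section model
variable {K : ℕ} {L : Fin K → ℕ}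

instance : Finite (ConfigKP K L) := by unfold ConfigKP; exact Subtype.finite

lemma indep_subset {σ τ : Finset (Σ k : Fin K, Fin (L k))} (h : σ ⊆ τ)
    (hτ : IsIndepKP K L τ) : IsIndepKP K L σ :=
  fun v hv w hw => hτ v (h hv) w (h hw)

/-- The empty configuration. -/
def emptyC : ConfigKP K L := ⟨∅, fun v hv => by simp at hv⟩

/-- The set of nonempty configurations occupying part `k`. -/
def Pt (k : Fin K) : Set (ConfigKP K L) := {z | z.1.Nonempty ∧ ∀ v ∈ z.1, v.1 = k}

lemma config_ext {σ τ : ConfigKP K L} (h : σ.1 = τ.1) : σ = τ := Subtype.ext h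

lemma HKP_le_zero (σ : ConfigKP K L) : HKP K L σ ≤ 0 := by
  simp [HKP]

lemma HKP_emptyC : HKP K L (emptyC : ConfigKP K L) = 0 := by simp [HKP, emptyC]

lemma HKP_lb (σ : ConfigKP K L) :
    -(Fintype.card (Σ k : Fin K, Fin (L k)) : ℝ) ≤ HKP K L σ := by
  simp only [HKP, neg_le_neg_iff, Nat.cast_le]
  exact Finset.card_le_univ _

lemma qKP_symm {σ τ : ConfigKP K L} (h : qKP K L σ τ) : qKP K L τ σ := by
  unfold qKP at *
  rwa [Finset.union_comm]

lemma qKP_cases {σ τ : ConfigKP K L} (h : qKP K L σ τ) :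
    (σ.1 ⊆ τ.1 ∧ τ.1.card = σ.1.card + 1) ∨ (τ.1 ⊆ σ.1 ∧ σ.1.card = τ.1.card + 1) := by
  unfold qKP at h
  rw [Finset.card_union_of_disjoint (disjoint_sdiff_sdiff)] at h
  rcases Nat.add_eq_one_iff.mp h with ⟨h1, h2⟩ | ⟨h1, h2⟩
  · left
    have hsub : σ.1 ⊆ τ.1 := by
      rwa [Finset.card_eq_zero, Finset.sdiff_eq_empty_iff_subset] at h1
    refine ⟨hsub, ?_⟩
    have := Finset.card_sdiff_add_card_eq_card hsub
    omega
  · right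
    have hsub : τ.1 ⊆ σ.1 := by
      rwa [Finset.card_eq_zero, Finset.sdiff_eq_empty_iff_subset] at h2
    refine ⟨hsub, ?_⟩
    have := Finset.card_sdiff_add_card_eq_card hsub
    omega

lemma qKP_ne {σ τ : ConfigKP K L} (h : qKP K L σ τ) : σ ≠ τ := by
  rintro rfl
  rcases qKP_cases h with ⟨_, h2⟩ | ⟨_, h2⟩ <;> omega

lemma qKP_insert {σ : ConfigKP K L} {v : Σ k : Fin K, Fin (L k)} (hv : v ∉ σ.1)
    (hind : IsIndepKP K L (insert v σ.1)) : qKP K L σ ⟨insert v σ.1, hind⟩ := by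
  unfold qKP
  have h1 : σ.1 \ insert v σ.1 = ∅ := by
    rw [Finset.sdiff_eq_empty_iff_subset]
    exact Finset.subset_insert _ _
  have h2 : insert v σ.1 \ σ.1 = {v} := by
    ext w
    simp only [Finset.mem_sdiff, Finset.mem_insert, Finset.mem_singleton]
    constructor
    · rintro ⟨rfl | hw, hw2⟩
      · rfl
      · exact absurd hw hw2
    · rintro rfl; exact ⟨Or.inl rfl, hv⟩
  simp [h1, h2]

lemma qKP_erase {σ : ConfigKP K L} {v : Σ k : Fin K, Fin (L k)} (hv : v ∈ σ.1) :
    qKP K L σ ⟨σ.1.erase v, indep_subset (Finset.erase_subset _ _) σ.2⟩ := by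
  apply qKP_symm
  have h := qKP_insert (σ := ⟨σ.1.erase v, indep_subset (Finset.erase_subset _ _) σ.2⟩)
    (v := v) (Finset.notMem_erase _ _)
    (by rw [Finset.insert_erase hv]; exact σ.2)
  convert h using 1
  refine iff_of_eq (congrArg _ (config_ext ?_))
  exact (Finset.insert_erase hv).symm

variable {s : Fin K → ConfigKP K L}

lemma subset_sk (hs : ∀ k, (s k).1 = Finset.univ.filter (fun v : Σ k : Fin K, Fin (L k) => v.1 = k))
    {k : Fin K} {z : ConfigKP K L} (hz : ∀ v ∈ z.1, v.1 = k) : z.1 ⊆ (s k).1 := by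
  intro v hv
  rw [hs k, Finset.mem_filter]
  exact ⟨Finset.mem_univ _, hz v hv⟩

lemma card_sk (hs : ∀ k, (s k).1 = Finset.univ.filter (fun v : Σ k : Fin K, Fin (L k) => v.1 = k))
    (k : Fin K) : (s k).1.card = L k := by
  rw [hs k]
  have : Finset.univ.filter (fun v : Σ k : Fin K, Fin (L k) => v.1 = k) =
      Finset.univ.map ⟨fun i : Fin (L k) => (⟨k, i⟩ : Σ k : Fin K, Fin (L k)), fun i j h => by simpa using h⟩ := by
    ext ⟨j, i⟩
    simp only [Finset.mem_filter, Finset.mem_univ, true_and, Finset.mem_map,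
      Function.Embedding.coeFn_mk]
    constructor
    · rintro rfl; exact ⟨i, rfl⟩
    · rintro ⟨i', hi⟩
      exact (congrArg Sigma.fst hi).symm
  rw [this, Finset.card_map, Finset.card_univ, Fintype.card_fin]

lemma mem_Pt_sk (hL : ∀ k, 1 ≤ L k)
    (hs : ∀ k, (s k).1 = Finset.univ.filter (fun v : Σ k : Fin K, Fin (L k) => v.1 = k))
    (k : Fin K) : s k ∈ (Pt k : Set (ConfigKP K L)) := by
  constructor
  · refine ⟨⟨k, ⟨0, hL k⟩⟩, ?_⟩
    rw [hs k, Finset.mem_filter]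
    exact ⟨Finset.mem_univ _, rfl⟩
  · intro v hv
    rw [hs k, Finset.mem_filter] at hv
    exact hv.2

/-- The singleton configuration at the first vertex of part `k`. -/
def singC (hL : ∀ k, 1 ≤ L k) (k : Fin K) : ConfigKP K L :=
  ⟨{⟨k, ⟨0, hL k⟩⟩}, by intro v hv w hw; simp at hv hw; rw [hv, hw]⟩

lemma singC_mem_Pt (hL : ∀ k, 1 ≤ L k) (k : Fin K) :
    singC hL k ∈ (Pt k : Set (ConfigKP K L)) := by
  constructor
  · exact ⟨_, Finset.mem_singleton_self _⟩
  · intro v hv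
    simp only [singC, Finset.mem_singleton] at hv
    rw [hv]

lemma HKP_singC (hL : ∀ k, 1 ≤ L k) (k : Fin K) : HKP K L (singC hL k) = -1 := by
  simp [HKP, singC]

lemma emptyC_not_mem_Pt (k : Fin K) : (emptyC : ConfigKP K L) ∉ Pt k := by
  rintro ⟨⟨v, hv⟩, -⟩
  simp [emptyC] at hv

lemma config_cases (σ : ConfigKP K L) : σ = emptyC ∨ ∃ k, σ ∈ Pt k := by
  rcases Finset.eq_empty_or_nonempty σ.1 with h | ⟨v, hv⟩
  · exact Or.inl (config_ext h)
  · exact Or.inr ⟨v.1, ⟨v, hv⟩, fun w hw => σ.2 w hw v hv⟩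

lemma mem_Pt_ne_k2 {k k2 : Fin K} (hkk : k ≠ k2) (hL : ∀ k, 1 ≤ L k)
    (hs : ∀ k, (s k).1 = Finset.univ.filter (fun v : Σ k : Fin K, Fin (L k) => v.1 = k))
    {z : ConfigKP K L} (hz : z ∈ Pt k) : z ≠ s k2 := by
  rintro rfl
  obtain ⟨⟨v, hv⟩, hall⟩ := hz
  have h2 : v.1 = k2 := by
    have := (hs k2) ▸ hv
    simpa using (Finset.mem_filter.mp this).2
  exact hkk ((hall v hv).symm.trans h2 ▸ rfl)

/-- Boundary lemma: a neighbor of a part-`k` configuration is in `Pt k` or is empty. -/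
lemma neighbor_of_Pt {k : Fin K} {σ τ : ConfigKP K L} (hσ : σ ∈ Pt k)
    (h : qKP K L σ τ) : τ ∈ Pt k ∨ τ = emptyC := by
  obtain ⟨⟨v0, hv0⟩, hall⟩ := hσ
  rcases qKP_cases h with ⟨hsub, -⟩ | ⟨hsub, -⟩
  · left
    refine ⟨⟨v0, hsub hv0⟩, fun w hw => ?_⟩
    have := τ.2 w hw v0 (hsub hv0)
    rw [this, hall v0 hv0]
  · rcases Finset.eq_empty_or_nonempty τ.1 with he | ⟨w, hw⟩
    · exact Or.inr (config_ext he)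
    · exact Or.inl ⟨⟨w, hw⟩, fun u hu => hall u (hsub hu)⟩

lemma Pt_card_le (hs : ∀ k, (s k).1 = Finset.univ.filter (fun v : Σ k : Fin K, Fin (L k) => v.1 = k))
    {k : Fin K} {z : ConfigKP K L} (hz : z ∈ Pt k) : z.1.card ≤ L k := by
  rw [← card_sk hs k]
  exact Finset.card_le_card (subset_sk hs hz.2)

lemma HKP_Pt_le (hz : z ∈ (Pt k : Set (ConfigKP K L))) : HKP K L z ≤ -1 := by
  obtain ⟨hne, -⟩ := hz
  have : 1 ≤ z.1.card := Finset.card_pos.mpr hne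
  simp only [HKP]
  have : (1 : ℝ) ≤ (z.1.card : ℝ) := by exact_mod_cast this
  linarith

/-- Monotone path: from `σ` down to a subset `τ`, staying between them. -/
lemma exists_mono_path :
    ∀ (n : ℕ) (σ τ : ConfigKP K L), (σ.1 \ τ.1).card = n → τ.1 ⊆ σ.1 →
      ∃ ω, IsPath (qKP K L) ω σ τ ∧ ∀ z ∈ ω, τ.1 ⊆ z.1 ∧ z.1 ⊆ σ.1 := by
  intro n
  induction n with
  | zero =>
    intro σ τ hc hsub
    have : σ = τ := by
      apply config_ext
      apply Finset.Subset.antisymm _ hsub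
      rwa [← Finset.sdiff_eq_empty_iff_subset, ← Finset.card_eq_zero]
    subst this
    exact ⟨[σ], isPath_singleton _ _, by simp [Finset.Subset.refl]⟩
  | succ n ih =>
    intro σ τ hc hsub
    have hne : (σ.1 \ τ.1).Nonempty := by
      rw [← Finset.card_pos, hc]; omega
    obtain ⟨v, hv⟩ := hne
    rw [Finset.mem_sdiff] at hv
    set σ' : ConfigKP K L := ⟨σ.1.erase v, indep_subset (Finset.erase_subset _ _) σ.2⟩ with hσ'
    have hsub' : τ.1 ⊆ σ'.1 := fun w hw =>
      Finset.mem_erase.mpr ⟨fun h => hv.2 (h ▸ hw), hsub hw⟩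
    have hcard' : (σ'.1 \ τ.1).card = n := by
      have : σ'.1 \ τ.1 = (σ.1 \ τ.1).erase v := by
        ext w
        simp only [hσ', Finset.mem_sdiff, Finset.mem_erase]
        tauto
      rw [this, Finset.card_erase_of_mem (Finset.mem_sdiff.mpr hv), hc]
      omega
    obtain ⟨ω', hp', hmem'⟩ := ih σ' τ hcard' hsub'
    refine ⟨σ :: ω', ⟨by simp, ?_, rfl, ?_⟩, ?_⟩
    · rw [List.Chain', List.isChain_cons]
      refine ⟨?_, hp'.2.1⟩
      intro y hy
      rw [hp'.2.2.1] at hy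
      simp only [Option.mem_some_iff] at hy
      rw [← hy] at *
      exact qKP_erase hv.1
    · rw [List.getLast?_cons, hp'.2.2.2]
      simp
    · intro z hz
      rcases List.mem_cons.mp hz with rfl | hz'
      · exact ⟨hsub, Finset.Subset.refl _⟩
      · obtain ⟨h1, h2⟩ := hmem' z hz'
        exact ⟨h1, h2.trans (Finset.erase_subset _ _)⟩

lemma exists_path_to_empty (σ : ConfigKP K L) :
    ∃ ω, IsPath (qKP K L) ω σ emptyC ∧ ∀ z ∈ ω, z.1 ⊆ σ.1 := by
  obtain ⟨ω, hp, hmem⟩ := exists_mono_path (σ.1 \ (emptyC : ConfigKP K L).1).card σ emptyC rfl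
    (by simp [emptyC])
  exact ⟨ω, hp, fun z hz => (hmem z hz).2⟩

lemma exists_path_any (x y : ConfigKP K L) : ∃ ω, IsPath (qKP K L) ω x y := by
  obtain ⟨ω1, hp1, -⟩ := exists_path_to_empty x
  obtain ⟨ω2, hp2, -⟩ := exists_path_to_empty y
  obtain ⟨ω, hp, -⟩ := hp1.glue (hp2.reverse (fun a b => qKP_symm))
  exact ⟨ω, hp⟩

lemma commE_le_zero (x y : ConfigKP K L) : commE (HKP K L) (qKP K L) x y ≤ 0 := by
  obtain ⟨ω, hp⟩ := exists_path_any x y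
  exact le_trans (commE_le (fun w => HKP_lb w) hp) (elev_le hp.1 (fun w _ => HKP_le_zero w))

lemma zero_le_elev_of_empty {ω : List (ConfigKP K L)} (h : emptyC ∈ ω) :
    (0 : ℝ) ≤ elev (HKP K L) ω := HKP_emptyC ▸ le_elev h

/-- Any path leaving `Pt k` passes through the empty configuration. -/
lemma elev_nonneg_of_leaves_Pt {k : Fin K} {x y : ConfigKP K L} {ω : List (ConfigKP K L)}
    (hp : IsPath (qKP K L) ω x y) (hx : x ∈ Pt k) (hy : y ∉ Pt k) :
    (0 : ℝ) ≤ elev (HKP K L) ω := by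
  obtain ⟨a, b, ha, hb, haS, hbS, hq⟩ := crossing ω x y hp hx hy
  rcases neighbor_of_Pt haS hq with h | rfl
  · exact absurd h hbS
  · exact zero_le_elev_of_empty hb

lemma zero_le_commE_of_Pt {k : Fin K} {x y : ConfigKP K L} (hx : x ∈ Pt k) (hy : y ∉ Pt k) :
    (0 : ℝ) ≤ commE (HKP K L) (qKP K L) x y :=
  le_commE (exists_path_any x y) (fun ω hp => elev_nonneg_of_leaves_Pt hp hx hy)

lemma commE_eq_zero_of_Pt {k : Fin K} {x y : ConfigKP K L} (hx : x ∈ Pt k) (hy : y ∉ Pt k) :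
    commE (HKP K L) (qKP K L) x y = 0 :=
  le_antisymm (commE_le_zero x y) (zero_le_commE_of_Pt hx hy)

lemma commE_le_neg_one (hL : ∀ k, 1 ≤ L k)
    (hs : ∀ k, (s k).1 = Finset.univ.filter (fun v : Σ k : Fin K, Fin (L k) => v.1 = k))
    {k : Fin K} {z : ConfigKP K L} (hz : z ∈ Pt k) :
    commE (HKP K L) (qKP K L) (s k) z ≤ -1 := by
  have hsub : z.1 ⊆ (s k).1 := subset_sk hs hz.2
  obtain ⟨ω, hp, hmem⟩ := exists_mono_path ((s k).1 \ z.1).card (s k) z rfl hsub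
  refine le_trans (commE_le (fun w => HKP_lb w) hp) (elev_le hp.1 (fun w hw => ?_))
  have hwPt : w ∈ Pt k := ⟨hz.1.mono (hmem w hw).1, fun v hv => by
    have h2 := (hmem w hw).2 hv
    rw [hs k, Finset.mem_filter] at h2
    exact h2.2⟩
  exact HKP_Pt_le hwPt

lemma mem_Pt_of_commE_neg (hL : ∀ k, 1 ≤ L k)
    (hs : ∀ k, (s k).1 = Finset.univ.filter (fun v : Σ k : Fin K, Fin (L k) => v.1 = k))
    {k : Fin K} {z : ConfigKP K L}
    (h : commE (HKP K L) (qKP K L) (s k) z < 0) : z ∈ Pt k := by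
  by_contra hz
  obtain ⟨e, ⟨ω, hp, rfl⟩, he⟩ := exists_lt_of_csInf_lt
    (s := {e | ∃ ω, IsPath (qKP K L) ω (s k) z ∧ elev (HKP K L) ω = e})
    (by obtain ⟨ω, hp⟩ := exists_path_any (s k) z; exact ⟨_, ω, hp, rfl⟩) h
  exact absurd (lt_of_le_of_lt (elev_nonneg_of_leaves_Pt hp (mem_Pt_sk hL hs k) hz) he)
    (lt_irrefl _)

end model

section model2
variable {K : ℕ} {L : Fin K → ℕ} {s : Fin K → ConfigKP K L}

lemma sk_not_mem_Pt (hs : ∀ k, (s k).1 = Finset.univ.filter (fun v : Σ k : Fin K, Fin (L k) => v.1 = k))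
    (hL : ∀ k, 1 ≤ L k) {k1 k2 : Fin K} (hk : k1 ≠ k2) : s k2 ∉ (Pt k1 : Set (ConfigKP K L)) :=
  fun h => mem_Pt_ne_k2 hk hL hs h rfl

lemma HKP_sk (hs : ∀ k, (s k).1 = Finset.univ.filter (fun v : Σ k : Fin K, Fin (L k) => v.1 = k))
    (k : Fin K) : HKP K L (s k) = -(L k : ℝ) := by
  simp [HKP, card_sk hs k]

lemma commA_eq_zero (hL : ∀ k, 1 ≤ L k)
    (hs : ∀ k, (s k).1 = Finset.univ.filter (fun v : Σ k : Fin K, Fin (L k) => v.1 = k))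
    {k1 k2 : Fin K} (hk : k1 ≠ k2) :
    commA (HKP K L) (qKP K L) (s k1) {s k2} = 0 := by
  unfold commA
  have : {e | ∃ y ∈ ({s k2} : Set (ConfigKP K L)), commE (HKP K L) (qKP K L) (s k1) y = e}
      = {commE (HKP K L) (qKP K L) (s k1) (s k2)} := by
    ext e
    simp [eq_comm]
  rw [this, csInf_singleton]
  exact commE_eq_zero_of_Pt (mem_Pt_sk hL hs k1) (sk_not_mem_Pt hs hL hk)

lemma initCycle_eq (hL : ∀ k, 1 ≤ L k)
    (hs : ∀ k, (s k).1 = Finset.univ.filter (fun v : Σ k : Fin K, Fin (L k) => v.1 = k))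
    {k1 k2 : Fin K} (hk : k1 ≠ k2) :
    initCycle (HKP K L) (qKP K L) {s k2} (s k1) = Pt k1 := by
  unfold initCycle
  rw [commA_eq_zero hL hs hk]
  ext z
  simp only [Set.mem_union, Set.mem_singleton_iff, Set.mem_setOf_eq]
  constructor
  · rintro (rfl | hlt)
    · exact mem_Pt_sk hL hs k1
    · exact mem_Pt_of_commE_neg hL hs hlt
  · intro hz
    right
    exact lt_of_le_of_lt (commE_le_neg_one hL hs hz) (by norm_num)

lemma sInf_H_Pt (hL : ∀ k, 1 ≤ L k)
    (hs : ∀ k, (s k).1 = Finset.univ.filter (fun v : Σ k : Fin K, Fin (L k) => v.1 = k))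
    (k : Fin K) : sInf (HKP K L '' Pt k) = -(L k : ℝ) := by
  apply le_antisymm
  · exact csInf_le (Set.Finite.bddBelow (Set.toFinite _))
      ⟨s k, mem_Pt_sk hL hs k, HKP_sk hs k⟩
  · refine le_csInf ⟨HKP K L (s k), ⟨s k, mem_Pt_sk hL hs k, rfl⟩⟩ ?_
    rintro e ⟨z, hz, rfl⟩
    have := Pt_card_le hs hz
    simp only [HKP, neg_le_neg_iff]
    exact_mod_cast this

lemma gammaInit_eq (hL : ∀ k, 1 ≤ L k)
    (hs : ∀ k, (s k).1 = Finset.univ.filter (fun v : Σ k : Fin K, Fin (L k) => v.1 = k))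
    {k1 k2 : Fin K} (hk : k1 ≠ k2) :
    gammaInit (HKP K L) (qKP K L) {s k2} (s k1) = (L k1 : ℝ) := by
  unfold gammaInit
  rw [commA_eq_zero hL hs hk, initCycle_eq hL hs hk, sInf_H_Pt hL hs k1]
  ring

end model2

section model3
variable {K : ℕ} {L : Fin K → ℕ} {s : Fin K → ConfigKP K L}

lemma mem_Pt_between {k : Fin K}
    (hs : ∀ k, (s k).1 = Finset.univ.filter (fun v : Σ k : Fin K, Fin (L k) => v.1 = k))
    {x w : ConfigKP K L} (hx : x ∈ Pt k) (h1 : x.1 ⊆ w.1) (h2 : w.1 ⊆ (s k).1) :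
    w ∈ (Pt k : Set (ConfigKP K L)) := by
  refine ⟨hx.1.mono h1, fun v hv => ?_⟩
  have := h2 hv
  rw [hs k, Finset.mem_filter] at this
  exact this.2

lemma setConn_Pt (hL : ∀ k, 1 ≤ L k)
    (hs : ∀ k, (s k).1 = Finset.univ.filter (fun v : Σ k : Fin K, Fin (L k) => v.1 = k))
    (k : Fin K) : SetConn (qKP K L) (Pt k : Set (ConfigKP K L)) := by
  intro x hx y hy
  obtain ⟨ω1, hp1, hm1⟩ := exists_mono_path ((s k).1 \ x.1).card (s k) x rfl (subset_sk hs hx.2)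
  obtain ⟨ω2, hp2, hm2⟩ := exists_mono_path ((s k).1 \ y.1).card (s k) y rfl (subset_sk hs hy.2)
  obtain ⟨ω, hp, hm⟩ := (hp1.reverse (fun a b => qKP_symm)).glue hp2
  refine ⟨ω, hp, fun z hz => ?_⟩
  rcases hm z hz with h | h
  · rw [List.mem_reverse] at h
    exact mem_Pt_between hs hx (hm1 z h).1 (hm1 z h).2
  · exact mem_Pt_between hs hy (hm2 z h).1 (hm2 z h).2

lemma q_singC_empty (hL : ∀ k, 1 ≤ L k) (k : Fin K) :
    qKP K L (singC hL k) (emptyC : ConfigKP K L) := by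
  apply qKP_symm
  have h := qKP_insert (σ := (emptyC : ConfigKP K L)) (v := ⟨k, ⟨0, hL k⟩⟩)
    (by simp [emptyC]) (by intro v hv w hw; simp [emptyC] at hv hw; rw [hv, hw])
  convert h using 1
  refine iff_of_eq (congrArg _ ?_)
  all_goals try (apply config_ext; simp [singC, emptyC])

lemma extBdry_Pt (hL : ∀ k, 1 ≤ L k) (k : Fin K) :
    extBdry (qKP K L) (Pt k : Set (ConfigKP K L)) = {emptyC} := by
  ext y
  constructor
  · rintro ⟨hy, x, hx, hq⟩
    rcases neighbor_of_Pt hx hq with h | rfl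
    · exact absurd h hy
    · rfl
  · rintro rfl
    exact ⟨emptyC_not_mem_Pt k, singC hL k, singC_mem_Pt hL k, q_singC_empty hL k⟩

lemma sSup_H_Pt (hL : ∀ k, 1 ≤ L k) (k : Fin K) :
    sSup (HKP K L '' (Pt k : Set (ConfigKP K L))) = -1 := by
  apply le_antisymm
  · refine csSup_le ⟨HKP K L (singC hL k), ⟨singC hL k, singC_mem_Pt hL k, rfl⟩⟩ ?_
    rintro e ⟨z, hz, rfl⟩
    exact HKP_Pt_le hz
  · rw [← HKP_singC hL k]
    exact le_csSup (Set.Finite.bddAbove (Set.toFinite _))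
      ⟨singC hL k, singC_mem_Pt hL k, rfl⟩

lemma cycle_Pt (hL : ∀ k, 1 ≤ L k)
    (hs : ∀ k, (s k).1 = Finset.univ.filter (fun v : Σ k : Fin K, Fin (L k) => v.1 = k))
    (k : Fin K) : IsNontrivialCycle (HKP K L) (qKP K L) (Pt k : Set (ConfigKP K L)) := by
  refine ⟨⟨s k, mem_Pt_sk hL hs k⟩, setConn_Pt hL hs k, ?_⟩
  rw [sSup_H_Pt hL k, extBdry_Pt hL k, Set.image_singleton, csInf_singleton, HKP_emptyC]
  norm_num

/-- No nontrivial cycle avoiding `s k2` contains the empty configuration. -/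
lemma no_nontrivial_empty
    {k2 : Fin K} {C : Set (ConfigKP K L)}
    (hC : IsNontrivialCycle (HKP K L) (qKP K L) C)
    (hB : C ⊆ {σ : ConfigKP K L | σ ≠ s k2}) (hmem : emptyC ∈ C) : False := by
  have hk2 : s k2 ∉ C := fun h => hB h rfl
  obtain ⟨ω, hp⟩ := exists_path_any (emptyC : ConfigKP K L) (s k2)
  obtain ⟨a, b, ha, hb, haC, hbC, hq⟩ := crossing ω _ _ hp hmem hk2
  have h1 : (0 : ℝ) ≤ sSup (HKP K L '' C) := by
    rw [← HKP_emptyC]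
    exact le_csSup (Set.Finite.bddAbove (Set.toFinite _)) ⟨emptyC, hmem, rfl⟩
  have h2 : sInf (HKP K L '' extBdry (qKP K L) C) ≤ HKP K L b :=
    csInf_le (Set.Finite.bddBelow (Set.toFinite _)) ⟨b, ⟨hbC, a, haC, hq⟩, rfl⟩
  have := hC.2.2
  have h3 := HKP_le_zero b
  linarith

lemma nontrivial_subset_Pt
    {k k2 : Fin K} {C : Set (ConfigKP K L)}
    (hC : IsNontrivialCycle (HKP K L) (qKP K L) C)
    (hB : C ⊆ {σ : ConfigKP K L | σ ≠ s k2})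
    {x : ConfigKP K L} (hxC : x ∈ C) (hxP : x ∈ Pt k) : C ⊆ Pt k := by
  intro y hy
  by_contra hyP
  obtain ⟨ω, hp, hm⟩ := hC.2.1 x hxC y hy
  obtain ⟨a, b, ha, hb, haS, hbS, hq⟩ := crossing ω _ _ hp hxP hyP
  rcases neighbor_of_Pt haS hq with h | rfl
  · exact hbS h
  · exact no_nontrivial_empty hC hB (hm _ hb)

lemma no_nontrivial_pt2 (hL : ∀ k, 1 ≤ L k)
    (hs : ∀ k, (s k).1 = Finset.univ.filter (fun v : Σ k : Fin K, Fin (L k) => v.1 = k))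
    {k2 : Fin K} {C : Set (ConfigKP K L)}
    (hC : IsNontrivialCycle (HKP K L) (qKP K L) C)
    (hB : C ⊆ {σ : ConfigKP K L | σ ≠ s k2})
    {x : ConfigKP K L} (hxC : x ∈ C) (hxP : x ∈ Pt k2) : False := by
  have hsub : C ⊆ Pt k2 := nontrivial_subset_Pt hC hB hxC hxP
  obtain ⟨z, hzC, hmax⟩ := Set.Finite.exists_maximalFor (fun z : ConfigKP K L => z.1.card)
    C (Set.toFinite C) ⟨x, hxC⟩
  have hzP : z ∈ Pt k2 := hsub hzC
  have hzss : z.1 ⊂ (s k2).1 := by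
    refine ⟨subset_sk hs hzP.2, fun h => ?_⟩
    exact hB hzC (config_ext (Finset.Subset.antisymm (subset_sk hs hzP.2) h))
  obtain ⟨w, hw1, hw2⟩ := Finset.exists_of_ssubset hzss
  have hwk : w.1 = k2 := by
    rw [hs k2, Finset.mem_filter] at hw1
    exact hw1.2
  have hind : IsIndepKP K L (insert w z.1) := by
    intro v hv u hu
    have hv' : v.1 = k2 := by
      rcases Finset.mem_insert.mp hv with rfl | hv2
      · exact hwk
      · exact hzP.2 v hv2
    have hu' : u.1 = k2 := by
      rcases Finset.mem_insert.mp hu with rfl | hu2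
      · exact hwk
      · exact hzP.2 u hu2
    rw [hv', hu']
  set τ : ConfigKP K L := ⟨insert w z.1, hind⟩ with hτ
  have hq : qKP K L z τ := qKP_insert hw2 hind
  have hcard : τ.1.card = z.1.card + 1 := by
    rw [hτ, Finset.card_insert_of_notMem hw2]
  have hτC : τ ∉ C := by
    intro h
    have := hmax h (by dsimp only; omega)
    dsimp only at this
    omega
  have h2 : sInf (HKP K L '' extBdry (qKP K L) C) ≤ HKP K L τ :=
    csInf_le (Set.Finite.bddBelow (Set.toFinite _)) ⟨τ, ⟨hτC, z, hzC, hq⟩, rfl⟩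
  have h1 : HKP K L z ≤ sSup (HKP K L '' C) :=
    le_csSup (Set.Finite.bddAbove (Set.toFinite _)) ⟨z, hzC, rfl⟩
  have := hC.2.2
  have : HKP K L τ < HKP K L z := by
    simp only [HKP, hcard]
    push_cast
    linarith
  linarith

lemma maxCycleIn_Pt (hL : ∀ k, 1 ≤ L k)
    (hs : ∀ k, (s k).1 = Finset.univ.filter (fun v : Σ k : Fin K, Fin (L k) => v.1 = k))
    {k k2 : Fin K} (hk : k ≠ k2) :
    MaxCycleIn (HKP K L) (qKP K L) {σ : ConfigKP K L | σ ≠ s k2} (Pt k) := by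
  refine ⟨Or.inr (cycle_Pt hL hs k), fun z hz => mem_Pt_ne_k2 hk hL hs hz, ?_⟩
  intro C' hC' hB' hsub
  rcases hC' with ⟨x, rfl⟩ | hC'
  · exact ((Set.Nonempty.subset_singleton_iff ⟨s k, mem_Pt_sk hL hs k⟩).mp hsub).symm
  · refine Set.Subset.antisymm ?_ hsub
    intro y hy
    by_contra hyP
    obtain ⟨ω, hp, hm⟩ := hC'.2.1 (s k) (hsub (mem_Pt_sk hL hs k)) y hy
    obtain ⟨a, b, ha, hb, haS, hbS, hq⟩ := crossing ω _ _ hp (mem_Pt_sk hL hs k) hyP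
    rcases neighbor_of_Pt haS hq with h | rfl
    · exact hbS h
    · exact no_nontrivial_empty hC' hB' (hm _ hb)

lemma commE_lb_s19 (x y : ConfigKP K L) :
    -(Fintype.card (Σ k : Fin K, Fin (L k)) : ℝ) ≤ commE (HKP K L) (qKP K L) x y :=
  le_commE (exists_path_any x y) (fun ω hp => le_trans (HKP_lb x) (le_elev hp.mem_head))

lemma depth_Pt (hL : ∀ k, 1 ≤ L k)
    (hs : ∀ k, (s k).1 = Finset.univ.filter (fun v : Σ k : Fin K, Fin (L k) => v.1 = k))
    (k : Fin K) : depth (HKP K L) (qKP K L) (Pt k : Set (ConfigKP K L)) = (L k : ℝ) := by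
  unfold depth
  have hset : {e | ∃ x ∈ (Pt k : Set (ConfigKP K L)), ∃ y ∈ (Pt k : Set (ConfigKP K L))ᶜ,
      commE (HKP K L) (qKP K L) x y = e} = {0} := by
    ext e
    simp only [Set.mem_setOf_eq, Set.mem_singleton_iff, Set.mem_compl_iff]
    constructor
    · rintro ⟨x, hx, y, hy, rfl⟩
      exact commE_eq_zero_of_Pt hx hy
    · rintro rfl
      exact ⟨s k, mem_Pt_sk hL hs k, emptyC, emptyC_not_mem_Pt k,
        commE_eq_zero_of_Pt (mem_Pt_sk hL hs k) (emptyC_not_mem_Pt k)⟩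
  unfold commSet
  rw [hset, csInf_singleton, sInf_H_Pt hL hs k]
  ring

lemma depth_singleton_le {x y : ConfigKP K L} (hq : qKP K L x y)
    (hxy : HKP K L y ≤ HKP K L x) :
    depth (HKP K L) (qKP K L) ({x} : Set (ConfigKP K L)) ≤ 0 := by
  unfold depth commSet
  rw [Set.image_singleton, csInf_singleton]
  have h1 : commE (HKP K L) (qKP K L) x y ≤ HKP K L x := by
    refine le_trans (commE_le (fun w => HKP_lb w) (isPath_pair hq)) ?_
    apply elev_le (by simp)
    intro w hw
    rcases List.mem_cons.mp hw with rfl | hw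
    · exact le_refl _
    · simp only [List.mem_singleton] at hw
      subst hw
      exact hxy
  have h2 : sInf {e | ∃ a ∈ ({x} : Set (ConfigKP K L)), ∃ b ∈ ({x} : Set (ConfigKP K L))ᶜ,
      commE (HKP K L) (qKP K L) a b = e} ≤ commE (HKP K L) (qKP K L) x y := by
    apply csInf_le
    · refine ⟨-(Fintype.card (Σ k : Fin K, Fin (L k)) : ℝ), ?_⟩
      rintro e ⟨a, -, b, -, rfl⟩
      exact commE_lb_s19 a b
    · exact ⟨x, rfl, y, fun h => qKP_ne hq (Set.mem_singleton_iff.mp h).symm, rfl⟩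
  linarith

end model3

section model4
variable {K : ℕ} {L : Fin K → ℕ} {s : Fin K → ConfigKP K L}

lemma exists_insert_neighbor
    (hs : ∀ k, (s k).1 = Finset.univ.filter (fun v : Σ k : Fin K, Fin (L k) => v.1 = k))
    {k : Fin K} {z : ConfigKP K L} (hz : z ∈ Pt k) (hzs : z ≠ s k) :
    ∃ τ : ConfigKP K L, qKP K L z τ ∧ HKP K L τ ≤ HKP K L z := by
  have hzss : z.1 ⊂ (s k).1 := by
    refine ⟨subset_sk hs hz.2, fun h => ?_⟩
    exact hzs (config_ext (Finset.Subset.antisymm (subset_sk hs hz.2) h))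
  obtain ⟨w, hw1, hw2⟩ := Finset.exists_of_ssubset hzss
  have hwk : w.1 = k := by
    rw [hs k, Finset.mem_filter] at hw1
    exact hw1.2
  have hind : IsIndepKP K L (insert w z.1) := by
    intro v hv u hu
    have hv' : v.1 = k := by
      rcases Finset.mem_insert.mp hv with rfl | hv2
      · exact hwk
      · exact hz.2 v hv2
    have hu' : u.1 = k := by
      rcases Finset.mem_insert.mp hu with rfl | hu2
      · exact hwk
      · exact hz.2 u hu2
    rw [hv', hu']
  refine ⟨⟨insert w z.1, hind⟩, qKP_insert hw2 hind, ?_⟩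
  simp only [HKP, Finset.card_insert_of_notMem hw2]
  push_cast
  linarith

lemma maxcycle_classify (hL : ∀ k, 1 ≤ L k)
    (hs : ∀ k, (s k).1 = Finset.univ.filter (fun v : Σ k : Fin K, Fin (L k) => v.1 = k))
    {k2 : Fin K} {C : Set (ConfigKP K L)}
    (hmc : MaxCycleIn (HKP K L) (qKP K L) {σ : ConfigKP K L | σ ≠ s k2} C) :
    (∃ k, k ≠ k2 ∧ C = Pt k) ∨
      ∃ x y : ConfigKP K L, C = {x} ∧ qKP K L x y ∧ HKP K L y ≤ HKP K L x := by
  obtain ⟨hcyc, hB, hmax⟩ := hmc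
  have hCne : C.Nonempty := by
    rcases hcyc with ⟨x, rfl⟩ | h
    · exact ⟨x, rfl⟩
    · exact h.1
  obtain ⟨x, hxC⟩ := hCne
  rcases config_cases x with rfl | ⟨k, hxP⟩
  · -- x is the empty configuration
    rcases hcyc with ⟨x', rfl⟩ | hnt
    · have : x' = emptyC := (Set.mem_singleton_iff.mp hxC).symm
      subst this
      exact Or.inr ⟨emptyC, singC hL k2, rfl, qKP_symm (q_singC_empty hL k2), by
        rw [HKP_emptyC, HKP_singC hL k2]; norm_num⟩
    · exact absurd (no_nontrivial_empty hnt hB hxC) not_false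
  · by_cases hkk : k = k2
    · subst hkk
      rcases hcyc with ⟨x', rfl⟩ | hnt
      · have hx' : x = x' := Set.mem_singleton_iff.mp hxC
        subst hx'
        have hxs : x ≠ s k := hB hxC
        obtain ⟨τ, hq, hτ⟩ := exists_insert_neighbor hs hxP hxs
        exact Or.inr ⟨x, τ, rfl, hq, hτ⟩
      · exact absurd (no_nontrivial_pt2 hL hs hnt hB hxC hxP) not_false
    · -- C must equal Pt k
      left
      refine ⟨k, hkk, ?_⟩
      have hCsub : C ⊆ Pt k := by
        rcases hcyc with ⟨x', rfl⟩ | hnt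
        · have : x = x' := Set.mem_singleton_iff.mp hxC
          subst this
          intro y hy
          rw [Set.mem_singleton_iff.mp hy]
          exact hxP
        · exact nontrivial_subset_Pt hnt hB hxC hxP
      have := hmax (Pt k) (Or.inr (cycle_Pt hL hs k))
        (fun z hz => mem_Pt_ne_k2 hkk hL hs hz) hCsub
      exact this.symm

lemma maxDepth_eq (hL : ∀ k, 1 ≤ L k)
    (hs : ∀ k, (s k).1 = Finset.univ.filter (fun v : Σ k : Fin K, Fin (L k) => v.1 = k))
    {k1 k2 : Fin K} (hk : k1 ≠ k2) :
    maxDepth (HKP K L) (qKP K L) {σ : ConfigKP K L | σ ≠ s k2} =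
      sSup {r : ℝ | ∃ k, k ≠ k2 ∧ (L k : ℝ) = r} := by
  set T : Set ℝ := {r : ℝ | ∃ k, k ≠ k2 ∧ (L k : ℝ) = r} with hT
  set D : Set ℝ := {d | ∃ C, MaxCycleIn (HKP K L) (qKP K L) {σ : ConfigKP K L | σ ≠ s k2} C ∧
    depth (HKP K L) (qKP K L) C = d} with hD
  have hTbdd : BddAbove T :=
    Set.Finite.bddAbove (Set.Finite.subset (Set.finite_range fun k => (L k : ℝ))
      (by rintro r ⟨k, -, rfl⟩; exact ⟨k, rfl⟩))
  have hTne : T.Nonempty := ⟨(L k1 : ℝ), k1, hk, rfl⟩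
  have h0T : (0 : ℝ) ≤ sSup T :=
    le_trans (by positivity) (le_csSup hTbdd ⟨k1, hk, rfl⟩)
  have hDle : ∀ d ∈ D, d ≤ sSup T := by
    rintro d ⟨C, hmc, rfl⟩
    rcases maxcycle_classify hL hs hmc with ⟨k, hkk, rfl⟩ | ⟨x, y, rfl, hq, hxy⟩
    · rw [depth_Pt hL hs k]
      exact le_csSup hTbdd ⟨k, hkk, rfl⟩
    · exact le_trans (depth_singleton_le hq hxy) h0T
  have hDne : D.Nonempty :=
    ⟨(L k1 : ℝ), Pt k1, maxCycleIn_Pt hL hs hk, depth_Pt hL hs k1⟩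
  have hDbdd : BddAbove D := ⟨sSup T, hDle⟩
  apply le_antisymm
  · exact csSup_le hDne hDle
  · refine csSup_le hTne ?_
    rintro r ⟨k, hkk, rfl⟩
    exact le_csSup hDbdd ⟨Pt k, maxCycleIn_Pt hL hs hkk, depth_Pt hL hs k⟩

lemma local_min_iff (hL : ∀ k, 1 ≤ L k)
    (hs : ∀ k, (s k).1 = Finset.univ.filter (fun v : Σ k : Fin K, Fin (L k) => v.1 = k))
    (k0 : Fin K) (σ : ConfigKP K L) :
    (∀ τ : ConfigKP K L, qKP K L σ τ → HKP K L σ ≤ HKP K L τ) ↔ ∃ k, σ = s k := by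
  constructor
  · intro h
    rcases config_cases σ with rfl | ⟨k, hσP⟩
    · exfalso
      have hq := qKP_symm (q_singC_empty hL k0)
      have := h _ hq
      rw [HKP_emptyC, HKP_singC hL k0] at this
      linarith
    · refine ⟨k, ?_⟩
      by_contra hne
      obtain ⟨τ, hq, hτ⟩ := exists_insert_neighbor hs hσP hne
      have h1 := h τ hq
      have h2 : HKP K L τ = HKP K L σ - 1 := by
        rcases qKP_cases hq with ⟨hsub, hc⟩ | ⟨hsub, hc⟩
        · simp only [HKP, hc]; push_cast; ring
        · exfalso
          simp only [HKP, hc] at hτ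
          push_cast at hτ
          linarith
      linarith
  · rintro ⟨k, rfl⟩
    intro τ hq
    rcases qKP_cases hq with ⟨hsub, hc⟩ | ⟨hsub, hc⟩
    · exfalso
      rcases neighbor_of_Pt (mem_Pt_sk hL hs k) hq with hτP | rfl
      · have := Pt_card_le hs hτP
        have := card_sk hs k
        omega
      · have : (emptyC : ConfigKP K L).1.card = 0 := by simp [emptyC]
        have := hL k
        have := card_sk hs k
        omega
    · simp only [HKP, hc]
      push_cast
      linarith

end model4


/-- for the hard-core model on the complete `K`-partite graph, the
configurations `σ_k` (part `k` fully occupied) are exactly the local minima of `H`;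
moreover for `k1 ≠ k2`, `Γ(σ_{k1},{σ_{k2}}) = L_{k1}` and
`Γ̃(X ∖ {σ_{k2}}) = L_* = max_{k ≠ k2} L_k`. -/
theorem complete_partite_landscape (K : ℕ) (L : Fin K → ℕ) (hL : ∀ k, 1 ≤ L k)
    (s : Fin K → ConfigKP K L)
    (hs : ∀ k, (s k).1 =
      Finset.univ.filter (fun v : Σ k : Fin K, Fin (L k) => v.1 = k))
    (k1 k2 : Fin K) (hk : k1 ≠ k2) :
    (∀ σ : ConfigKP K L,
        (∀ τ : ConfigKP K L, qKP K L σ τ → HKP K L σ ≤ HKP K L τ) ↔ ∃ k, σ = s k) ∧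
    gammaInit (HKP K L) (qKP K L) {s k2} (s k1) = (L k1 : ℝ) ∧
    maxDepth (HKP K L) (qKP K L) {σ : ConfigKP K L | σ ≠ s k2} =
      sSup {r : ℝ | ∃ k, k ≠ k2 ∧ (L k : ℝ) = r} := by
  exact ⟨fun σ => local_min_iff hL hs k1 σ, gammaInit_eq hL hs hk, maxDepth_eq hL hs hk⟩
end
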